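/- For every real z ≥ 8 and every a with 0 ≤ a ≤ 3, the Gaussian tail satisfies 1 - Φ(z - a) ≤ 2 e^{z a} (1 - Φ(z)). -/

import Mathlib

noncomputable def stdNormalPDF (x : ℝ) : ℝ :=
  (Real.sqrt (2 * Real.pi))⁻¹ * Real.exp (-x ^ 2 / 2)

noncomputable def stdNormalCDF (x : ℝ) : ℝ :=
  ∫ t in Set.Iic x, stdNormalPDF t

open Real MeasureTheory Set Filter

lemma gauss_E_eq : (fun t : ℝ => Real.exp (-t ^ 2 / 2)) =
    fun t : ℝ => Real.exp (-(1/2) * t ^ 2) := by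
  funext t; ring_nf

lemma gauss_integrable : Integrable (fun t : ℝ => Real.exp (-t ^ 2 / 2)) := by
  rw [gauss_E_eq]
  exact integrable_exp_neg_mul_sq (by norm_num)

lemma gauss_mul_integrable : Integrable (fun t : ℝ => t * Real.exp (-t ^ 2 / 2)) := by
  have := integrable_mul_exp_neg_mul_sq (b := 1/2) (by norm_num)
  convert this using 2 with t
  ring_nf

lemma gauss_tendsto : Tendsto (fun t : ℝ => Real.exp (-t ^ 2 / 2)) atTop (nhds 0) := by
  have h1 : Tendsto (fun t : ℝ => -t ^ 2 / 2) atTop atBot := by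
    apply Tendsto.atBot_div_const (by norm_num)
    exact tendsto_neg_atBot_iff.mpr (tendsto_pow_atTop (by norm_num))
  exact Real.tendsto_exp_atBot.comp h1

lemma gauss_int_mul (x : ℝ) :
    ∫ t in Ioi x, t * Real.exp (-t ^ 2 / 2) = Real.exp (-x ^ 2 / 2) := by
  have h : ∀ t ∈ Ici x, HasDerivAt (fun t : ℝ => -Real.exp (-t ^ 2 / 2))
      (t * Real.exp (-t ^ 2 / 2)) t := by
    intro t _
    have h1 : HasDerivAt (fun t : ℝ => -t ^ 2 / 2) (-t) t := by
      have := ((hasDerivAt_pow 2 t).neg).div_const 2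
      exact this.congr_deriv (by ring)
    have := (h1.exp).neg
    exact this.congr_deriv (by ring)
  have := integral_Ioi_of_hasDerivAt_of_tendsto' h gauss_mul_integrable.integrableOn
    (gauss_tendsto.neg)
  simpa using this

lemma gauss_upper (x : ℝ) (hx : 0 < x) :
    ∫ t in Ioi x, Real.exp (-t ^ 2 / 2) ≤ Real.exp (-x ^ 2 / 2) / x := by
  have h1 : ∫ t in Ioi x, Real.exp (-t ^ 2 / 2) ≤
      ∫ t in Ioi x, (t / x) * Real.exp (-t ^ 2 / 2) := by
    have hIntg : Integrable (fun t : ℝ => (t / x) * Real.exp (-t ^ 2 / 2)) := by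
      have := gauss_mul_integrable.div_const x
      convert this using 2 with t
      ring
    apply setIntegral_mono_on gauss_integrable.integrableOn hIntg.integrableOn
      measurableSet_Ioi ?_
    intro t ht
    have htx : x ≤ t := le_of_lt ht
    have h1x : (1:ℝ) ≤ t / x := (one_le_div hx).mpr htx
    nlinarith [Real.exp_pos (-t ^ 2 / 2)]
  have h2 : ∫ t in Ioi x, (t / x) * Real.exp (-t ^ 2 / 2) =
      (∫ t in Ioi x, t * Real.exp (-t ^ 2 / 2)) / x := by
    rw [← integral_div]
    congr 1; funext t; ring
  rw [h2, gauss_int_mul] at h1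
  exact h1

lemma gauss_lower (x : ℝ) (hx : 0 ≤ x) :
    Real.exp (-x ^ 2 / 2) / (1 + x) ≤ ∫ t in Ioi x, Real.exp (-t ^ 2 / 2) := by
  set f' : ℝ → ℝ := fun t => t * Real.exp (-t ^ 2 / 2) / (1 + t)
      + Real.exp (-t ^ 2 / 2) / (1 + t) ^ 2 with hf'
  have hpos : ∀ t ∈ Ici x, (0:ℝ) < 1 + t := fun t ht => by
    have : x ≤ t := ht; linarith
  have h : ∀ t ∈ Ici x, HasDerivAt (fun t : ℝ => -(Real.exp (-t ^ 2 / 2) / (1 + t)))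
      (f' t) t := by
    intro t ht
    have h1 : HasDerivAt (fun t : ℝ => -t ^ 2 / 2) (-t) t := by
      have := ((hasDerivAt_pow 2 t).neg).div_const 2
      exact this.congr_deriv (by ring)
    have h2 : HasDerivAt (fun t : ℝ => Real.exp (-t ^ 2 / 2)) (-t * Real.exp (-t ^ 2 / 2)) t := by
      have := h1.exp; convert this using 1; ring
    have h3 : HasDerivAt (fun t : ℝ => 1 + t) 1 t := by
      simpa using (hasDerivAt_id t).const_add 1
    have h4 := (h2.div h3 (ne_of_gt (hpos t ht))).neg
    refine h4.congr_deriv ?_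
    have hne : (1 + t) ≠ 0 := ne_of_gt (hpos t ht)
    simp only [hf']
    field_simp
    ring
  have hbound : ∀ t ∈ Ioi x, f' t ≤ Real.exp (-t ^ 2 / 2) := by
    intro t ht
    have ht0 : (0:ℝ) ≤ t := le_trans hx (le_of_lt ht)
    have h1t : (0:ℝ) < 1 + t := by linarith
    have hE := Real.exp_pos (-t ^ 2 / 2)
    have key : t * Real.exp (-t ^ 2 / 2) / (1 + t)
        + Real.exp (-t ^ 2 / 2) / (1 + t) ^ 2 ≤ Real.exp (-t ^ 2 / 2) := by
      rw [div_add_div _ _ (ne_of_gt h1t) (ne_of_gt (pow_pos h1t 2)),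
        div_le_iff₀ (by positivity)]
      nlinarith [sq_nonneg t, mul_pos hE h1t]
    simpa only [hf'] using key
  have hnn : ∀ t ∈ Ioi x, 0 ≤ f' t := by
    intro t ht
    have ht0 : (0:ℝ) ≤ t := le_trans hx (le_of_lt ht)
    have h1t : (0:ℝ) < 1 + t := by linarith
    have hE := (Real.exp_pos (-t ^ 2 / 2)).le
    have key : (0:ℝ) ≤ t * Real.exp (-t ^ 2 / 2) / (1 + t)
        + Real.exp (-t ^ 2 / 2) / (1 + t) ^ 2 := by positivity
    simpa only [hf'] using key
  have hcont : ContinuousOn f' (Ioi x) := by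
    apply ContinuousOn.add
    · exact ContinuousOn.div (by fun_prop) (by fun_prop)
        (fun t ht => ne_of_gt (hpos t (Ioi_subset_Ici_self ht)))
    · exact ContinuousOn.div (by fun_prop) (by fun_prop)
        (fun t ht => ne_of_gt (pow_pos (hpos t (Ioi_subset_Ici_self ht)) 2))
  have hint : IntegrableOn f' (Ioi x) := by
    apply Integrable.mono' gauss_integrable.integrableOn
      (hcont.aestronglyMeasurable measurableSet_Ioi)
    filter_upwards [ae_restrict_mem measurableSet_Ioi] with t ht
    rw [Real.norm_eq_abs, abs_of_nonneg (hnn t ht)]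
    exact hbound t ht
  have htend : Tendsto (fun t : ℝ => -(Real.exp (-t ^ 2 / 2) / (1 + t))) atTop (nhds 0) := by
    have h0 : Tendsto (fun t : ℝ => Real.exp (-t ^ 2 / 2) / (1 + t)) atTop (nhds 0) := by
      apply squeeze_zero_norm' ?_ gauss_tendsto
      filter_upwards [eventually_ge_atTop (0:ℝ)] with t ht
      have h1t : (0:ℝ) < 1 + t := by linarith
      rw [Real.norm_eq_abs, abs_of_nonneg (by positivity)]
      rw [div_le_iff₀ h1t]
      nlinarith [Real.exp_pos (-t ^ 2 / 2)]
    simpa using h0.neg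
  have hFTC := integral_Ioi_of_hasDerivAt_of_tendsto' h hint htend
  have heq : ∫ t in Ioi x, f' t = Real.exp (-x ^ 2 / 2) / (1 + x) := by
    rw [hFTC]; ring
  rw [← heq]
  apply setIntegral_mono_on hint gauss_integrable.integrableOn measurableSet_Ioi hbound

lemma sqrt_two_pi_pos : (0:ℝ) < Real.sqrt (2 * Real.pi) :=
  Real.sqrt_pos.mpr (by positivity)

lemma gauss_total : ∫ t : ℝ, stdNormalPDF t = 1 := by
  unfold stdNormalPDF
  rw [integral_const_mul]
  have : ∫ t : ℝ, Real.exp (-t ^ 2 / 2) = Real.sqrt (2 * Real.pi) := by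
    rw [gauss_E_eq]
    rw [integral_gaussian]
    rw [show Real.pi / (1/2 : ℝ) = 2 * Real.pi by ring]
  rw [this, inv_mul_cancel₀ (ne_of_gt sqrt_two_pi_pos)]

lemma gauss_tail (x : ℝ) :
    1 - stdNormalCDF x =
      (Real.sqrt (2 * Real.pi))⁻¹ * ∫ t in Ioi x, Real.exp (-t ^ 2 / 2) := by
  have hInt : Integrable stdNormalPDF := by
    unfold stdNormalPDF
    exact gauss_integrable.const_mul _
  have hsplit := intervalIntegral.integral_Iic_add_Ioi (b := x) hInt.integrableOn hInt.integrableOn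
    (μ := MeasureTheory.volume) (f := stdNormalPDF)
  rw [gauss_total] at hsplit
  have : (1:ℝ) - stdNormalCDF x = ∫ t in Ioi x, stdNormalPDF t := by
    unfold stdNormalCDF; linarith
  rw [this]
  unfold stdNormalPDF
  rw [← integral_const_mul]

theorem gaussian_tail_shift (z a : ℝ) (hz : 8 ≤ z) (ha0 : 0 ≤ a) (ha3 : a ≤ 3) :
    1 - stdNormalCDF (z - a) ≤ 2 * Real.exp (z * a) * (1 - stdNormalCDF z) := by
  have hza : (0:ℝ) < z - a := by linarith
  have hc := sqrt_two_pi_pos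
  rw [gauss_tail, gauss_tail]
  have h1 := gauss_upper (z - a) hza
  have h2 := gauss_lower z (by linarith)
  have hmid : Real.exp (-(z - a) ^ 2 / 2) / (z - a) ≤
      2 * Real.exp (z * a) * (Real.exp (-z ^ 2 / 2) / (1 + z)) := by
    have h1z : (0:ℝ) < 1 + z := by linarith
    have hexp : Real.exp (-(z - a) ^ 2 / 2) =
        Real.exp (z * a) * Real.exp (-z ^ 2 / 2) * Real.exp (-a ^ 2 / 2) := by
      rw [← Real.exp_add, ← Real.exp_add]; congr 1; ring
    have ha1 : Real.exp (-a ^ 2 / 2) ≤ 1 := Real.exp_le_one_iff.mpr (by nlinarith)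
    have hP : (0:ℝ) < Real.exp (z * a) * Real.exp (-z ^ 2 / 2) :=
      mul_pos (Real.exp_pos _) (Real.exp_pos _)
    have hzz : 1 + z ≤ 2 * (z - a) := by linarith
    rw [show 2 * Real.exp (z * a) * (Real.exp (-z ^ 2 / 2) / (1 + z)) =
        (2 * Real.exp (z * a) * Real.exp (-z ^ 2 / 2)) / (1 + z) by ring]
    rw [div_le_div_iff₀ hza h1z, hexp]
    nlinarith [mul_le_mul_of_nonneg_left ha1 (mul_nonneg hP.le h1z.le),
      mul_le_mul_of_nonneg_left hzz hP.le]
  calc (Real.sqrt (2 * Real.pi))⁻¹ * ∫ t in Ioi (z - a), Real.exp (-t ^ 2 / 2)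
      ≤ (Real.sqrt (2 * Real.pi))⁻¹ * (Real.exp (-(z - a) ^ 2 / 2) / (z - a)) := by
        apply mul_le_mul_of_nonneg_left h1 (inv_nonneg.mpr hc.le)
    _ ≤ (Real.sqrt (2 * Real.pi))⁻¹ *
        (2 * Real.exp (z * a) * (Real.exp (-z ^ 2 / 2) / (1 + z))) := by
        apply mul_le_mul_of_nonneg_left hmid (inv_nonneg.mpr hc.le)
    _ ≤ 2 * Real.exp (z * a) *
        ((Real.sqrt (2 * Real.pi))⁻¹ * ∫ t in Ioi z, Real.exp (-t ^ 2 / 2)) := by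
        rw [show (Real.sqrt (2 * Real.pi))⁻¹ *
            (2 * Real.exp (z * a) * (Real.exp (-z ^ 2 / 2) / (1 + z))) =
            2 * Real.exp (z * a) *
            ((Real.sqrt (2 * Real.pi))⁻¹ * (Real.exp (-z ^ 2 / 2) / (1 + z))) by ring]
        apply mul_le_mul_of_nonneg_left _ (by positivity)
        apply mul_le_mul_of_nonneg_left h2 (inv_nonneg.mpr hc.le)
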